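/- For every choice of constants 0 < α ≤ β and T > 0 there exists a constant C > 0 with the following property. For every abstract FEM setting (H, V, ‖·‖_h, a_h) with constants α, β, every h > 0 and C_inv > 0 satisfying the inverse inequality ‖v‖_h ≤ C_inv h⁻² ‖v‖ for all v ∈ V, every N ∈ ℕ with N ≥ 2 and time step k := T/N satisfying the CFL condition k ≤ β^{−1/2} C_inv^{−1} h², every f¹, …, f^{N−1} ∈ H, and every U⁰, …, Uᴺ ∈ V satisfying the explicit scheme ((U^{n+1} − 2Uⁿ + U^{n−1})/k², v) + a_h(Uⁿ, v) = (fⁿ, v) for all v ∈ V and n = 1, …, N−1, one has for every 1 ≤ m ≤ N−1: ‖(U^{m+1} − U^m)/k‖ + ‖(U^{m+1} + U^m)/2‖_h ≤ C ( ‖(U¹ − U⁰)/k‖ + ‖(U¹ + U⁰)/2‖_h + max_{1 ≤ n ≤ N−1} ‖fⁿ‖ ). -/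

import Mathlib

open scoped RealInnerProductSpace

lemma aux_inner {H : Type} [NormedAddCommGroup H] [InnerProductSpace ℝ H]
    (k : ℝ) (hk : k ≠ 0) (p q r : H) :
    ⟪(k ^ 2)⁻¹ • (r - (2:ℝ) • q + p), r - p⟫ =
      ‖k⁻¹ • (r - q)‖ ^ 2 - ‖k⁻¹ • (q - p)‖ ^ 2 := by
  have h1 : r - (2:ℝ) • q + p = (r - q) - (q - p) := by module
  have h2 : r - p = (r - q) + (q - p) := by abel
  rw [h1, h2, real_inner_smul_left, inner_sub_left, inner_add_right, inner_add_right,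
    real_inner_comm (q - p) (r - q), real_inner_self_eq_norm_sq, real_inner_self_eq_norm_sq,
    norm_smul, norm_smul, Real.norm_eq_abs, mul_pow, mul_pow, sq_abs]
  field_simp
  ring

lemma aux_bilin {V : Type*} [AddCommGroup V] [Module ℝ V]
    (a : V →ₗ[ℝ] V →ₗ[ℝ] ℝ) (hs : ∀ w v, a w v = a v w)
    (k : ℝ) (hk : k ≠ 0) (p q r : V) :
    a ((1/2:ℝ) • (r + q)) ((1/2:ℝ) • (r + q))
      - k ^ 2 / 4 * a (k⁻¹ • (r - q)) (k⁻¹ • (r - q))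
      - (a ((1/2:ℝ) • (q + p)) ((1/2:ℝ) • (q + p))
        - k ^ 2 / 4 * a (k⁻¹ • (q - p)) (k⁻¹ • (q - p)))
      = a q (r - p) := by
  simp only [map_add, map_sub, map_smul, LinearMap.add_apply, LinearMap.sub_apply,
    LinearMap.smul_apply, smul_eq_mul]
  rw [hs p q]
  field_simp
  linear_combination 8 * hs r q

set_option maxHeartbeats 2000000 in
/-- Conditional stability of the explicit fully discrete scheme under the CFL condition. -/
theorem explicit_scheme_stability (α β T : ℝ) (hα : 0 < α) (hαβ : α ≤ β) (hT : 0 < T) :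
    ∃ C > 0,
      ∀ (H : Type) [NormedAddCommGroup H] [InnerProductSpace ℝ H] [CompleteSpace H]
        (V : Submodule ℝ H) (Nh : Seminorm ℝ V) (a : V →ₗ[ℝ] V →ₗ[ℝ] ℝ),
        (∀ w v : V, a w v = a v w) →
        (∀ w : V, α * Nh w ^ 2 ≤ a w w) →
        (∀ w v : V, |a w v| ≤ β * Nh w * Nh v) →
        ∀ (h Cinv : ℝ), 0 < h → 0 < Cinv →
          (∀ v : V, Nh v ≤ Cinv / h ^ 2 * ‖v‖) →
          ∀ (N : ℕ) (hN : 2 ≤ N) (k : ℝ), k = T / N →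
            k ≤ (Real.sqrt β)⁻¹ * Cinv⁻¹ * h ^ 2 →
            ∀ (f : ℕ → H) (U : ℕ → V),
              (∀ n, 1 ≤ n → n ≤ N - 1 → ∀ v : V,
                ⟪(((k ^ 2)⁻¹ • (U (n + 1) - (2 : ℝ) • U n + U (n - 1)) : V) : H), (v : H)⟫
                    + a (U n) v = ⟪f n, (v : H)⟫) →
              ∀ m, 1 ≤ m → m ≤ N - 1 →
                ‖(k⁻¹ • (U (m + 1) - U m) : V)‖ + Nh ((1 / 2 : ℝ) • (U (m + 1) + U m))
                  ≤ C * (‖(k⁻¹ • (U 1 - U 0) : V)‖ + Nh ((1 / 2 : ℝ) • (U 1 + U 0))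
                      + (Finset.Icc 1 (N - 1)).sup' (Finset.nonempty_Icc.mpr (by omega))
                          fun n => ‖f n‖) := by
  have hβ : (0:ℝ) < β := lt_of_lt_of_le hα hαβ
  refine ⟨(Real.sqrt 2 + (Real.sqrt α)⁻¹) * (1 + Real.sqrt β + Real.sqrt 2 * T), by positivity, ?_⟩
  intro H _ _ _ V Nh a hsymm hcoer hbound h Cinv hh hCinv hinv N hN k hkT hCFL f U hscheme m hm1 hm2
  have hNR : (2:ℝ) ≤ (N:ℝ) := by exact_mod_cast hN
  have hk : 0 < k := by rw [hkT]; positivity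
  have hk' : k ≠ 0 := ne_of_gt hk
  have hkN : k * N = T := by rw [hkT]; field_simp
  -- CFL consequence
  have hCFL2 : ∀ w : V, k ^ 2 * a w w ≤ ‖w‖ ^ 2 := by
    intro w
    have h1 : a w w ≤ β * Nh w ^ 2 := by
      have := le_trans (le_abs_self _) (hbound w w)
      nlinarith [this]
    have h2 := hinv w
    have hNh0 : 0 ≤ Nh w := apply_nonneg Nh w
    have hsβ : 0 < Real.sqrt β := Real.sqrt_pos.mpr hβ
    have hD : (0:ℝ) < Cinv / h ^ 2 := by positivity
    have e2 : k * (Real.sqrt β * (Cinv / h ^ 2)) ≤ 1 := by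
      have e1 : (Real.sqrt β)⁻¹ * Cinv⁻¹ * h ^ 2 = (Real.sqrt β * (Cinv / h ^ 2))⁻¹ := by
        field_simp
      rw [e1] at hCFL
      calc k * (Real.sqrt β * (Cinv / h ^ 2))
          ≤ (Real.sqrt β * (Cinv / h ^ 2))⁻¹ * (Real.sqrt β * (Cinv / h ^ 2)) :=
            mul_le_mul_of_nonneg_right hCFL (by positivity)
        _ = 1 := inv_mul_cancel₀ (by positivity)
    have e3 : k ^ 2 * β * (Cinv / h ^ 2) ^ 2 ≤ 1 := by
      have := mul_le_mul e2 e2 (by positivity) zero_le_one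
      nlinarith [Real.sq_sqrt hβ.le]
    have h2' : Nh w ^ 2 ≤ (Cinv / h ^ 2) ^ 2 * ‖w‖ ^ 2 := by nlinarith [norm_nonneg w]
    nlinarith [mul_le_mul_of_nonneg_left h1 (sq_nonneg k),
      mul_le_mul_of_nonneg_left h2' (mul_nonneg (sq_nonneg k) hβ.le),
      mul_le_mul_of_nonneg_right e3 (sq_nonneg ‖w‖)]
  have ncoe : ∀ x : V, ‖x‖ = ‖(x : H)‖ := fun x => rfl
  -- energy
  obtain ⟨E, hE⟩ : ∃ E : ℕ → ℝ, E = fun n =>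
    ‖(k⁻¹ • (U (n + 1) - U n) : V)‖ ^ 2
      + a ((1/2:ℝ) • (U (n + 1) + U n)) ((1/2:ℝ) • (U (n + 1) + U n))
      - k ^ 2 / 4 * a (k⁻¹ • (U (n + 1) - U n)) (k⁻¹ • (U (n + 1) - U n)) := ⟨_, rfl⟩
  have hElow : ∀ n, 3/4 * ‖(k⁻¹ • (U (n + 1) - U n) : V)‖ ^ 2
      + α * Nh ((1/2:ℝ) • (U (n + 1) + U n)) ^ 2 ≤ E n := by
    intro n
    have h1 := hcoer ((1/2:ℝ) • (U (n + 1) + U n))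
    have h2 := hCFL2 (k⁻¹ • (U (n + 1) - U n))
    simp only [hE]
    linarith
  have hE0 : ∀ n, 0 ≤ E n := by
    intro n
    have h1 := hElow n
    have h2 : (0:ℝ) ≤ 3/4 * ‖(k⁻¹ • (U (n + 1) - U n) : V)‖ ^ 2
        + α * Nh ((1/2:ℝ) • (U (n + 1) + U n)) ^ 2 := by positivity
    linarith
  -- energy identity
  have hstep : ∀ j, j + 1 ≤ N - 1 →
      E (j + 1) - E j = ⟪f (j + 1), ((U (j + 1 + 1) - U j : V) : H)⟫ := by
    intro j hj
    have hs := hscheme (j + 1) (Nat.le_add_left 1 j) hj (U (j + 1 + 1) - U j)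
    simp only [Nat.add_sub_cancel] at hs
    have i1 := aux_inner k hk' ((U j : V) : H) ((U (j + 1) : V) : H) ((U (j + 1 + 1) : V) : H)
    have i2 := aux_bilin a hsymm k hk' (U j) (U (j + 1)) (U (j + 1 + 1))
    simp only [Submodule.coe_smul, Submodule.coe_sub, Submodule.coe_add] at hs
    simp only [hE, ncoe, Submodule.coe_smul, Submodule.coe_sub, Submodule.coe_add]
    linarith [hs, i1, i2]
  -- reduce F to abstract bound
  have main : ∀ F : ℝ, 0 ≤ F → (∀ n, 1 ≤ n → n ≤ N - 1 → ‖f n‖ ≤ F) →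
      ‖(k⁻¹ • (U (m + 1) - U m) : V)‖ + Nh ((1 / 2 : ℝ) • (U (m + 1) + U m))
        ≤ (Real.sqrt 2 + (Real.sqrt α)⁻¹) * (1 + Real.sqrt β + Real.sqrt 2 * T) *
          (‖(k⁻¹ • (U 1 - U 0) : V)‖ + Nh ((1 / 2 : ℝ) • (U 1 + U 0)) + F) := by
    intro F hF0 hFb
    have hd : ∀ n, ‖(k⁻¹ • (U (n + 1) - U n) : V)‖ ≤ Real.sqrt 2 * Real.sqrt (E n) := by
      intro n
      have h1 := hElow n
      have h2 : ‖(k⁻¹ • (U (n + 1) - U n) : V)‖ ^ 2 ≤ 2 * E n := by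
        nlinarith [hE0 n, mul_nonneg hα.le (sq_nonneg (Nh ((1/2:ℝ) • (U (n + 1) + U n))))]
      calc ‖(k⁻¹ • (U (n + 1) - U n) : V)‖
          = Real.sqrt (‖(k⁻¹ • (U (n + 1) - U n) : V)‖ ^ 2) := (Real.sqrt_sq (norm_nonneg _)).symm
        _ ≤ Real.sqrt (2 * E n) := Real.sqrt_le_sqrt h2
        _ = Real.sqrt 2 * Real.sqrt (E n) := Real.sqrt_mul (by norm_num) _
    have hstep2 : ∀ j, j + 1 ≤ N - 1 →
        Real.sqrt (E (j + 1)) ≤ Real.sqrt (E j) + Real.sqrt 2 * (k * F) := by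
      intro j hj
      have hid := hstep j hj
      have e : (U (j + 1 + 1) - U j : V)
          = k • (k⁻¹ • (U (j + 1 + 1) - U (j + 1))) + k • (k⁻¹ • (U (j + 1) - U j)) := by
        rw [smul_inv_smul₀ hk', smul_inv_smul₀ hk']; abel
      have hnorm : ‖((U (j + 1 + 1) - U j : V) : H)‖
          ≤ k * (‖(k⁻¹ • (U (j + 1 + 1) - U (j + 1)) : V)‖ + ‖(k⁻¹ • (U (j + 1) - U j) : V)‖) := by
        rw [← ncoe, e]
        calc ‖(k • (k⁻¹ • (U (j + 1 + 1) - U (j + 1))) + k • (k⁻¹ • (U (j + 1) - U j)) : V)‖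
            ≤ ‖(k • (k⁻¹ • (U (j + 1 + 1) - U (j + 1))) : V)‖
              + ‖(k • (k⁻¹ • (U (j + 1) - U j)) : V)‖ := norm_add_le _ _
          _ = k * (‖(k⁻¹ • (U (j + 1 + 1) - U (j + 1)) : V)‖
              + ‖(k⁻¹ • (U (j + 1) - U j) : V)‖) := by
              simp [norm_smul, Real.norm_eq_abs, abs_of_pos hk]; ring
      have hip : ⟪f (j + 1), ((U (j + 1 + 1) - U j : V) : H)⟫
          ≤ F * (k * (‖(k⁻¹ • (U (j + 1 + 1) - U (j + 1)) : V)‖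
            + ‖(k⁻¹ • (U (j + 1) - U j) : V)‖)) :=
        le_trans (real_inner_le_norm _ _)
          (mul_le_mul (hFb (j + 1) (Nat.le_add_left 1 j) hj) hnorm (norm_nonneg _) hF0)
      have h1 := hd (j + 1)
      have h0 := hd j
      have hkF : 0 ≤ k * F := mul_nonneg hk.le hF0
      have hx2 : Real.sqrt (E (j + 1)) ^ 2 = E (j + 1) := Real.sq_sqrt (hE0 _)
      have hy2 : Real.sqrt (E j) ^ 2 = E j := Real.sq_sqrt (hE0 _)
      have hEd2 : Real.sqrt (E (j + 1)) ^ 2 ≤ Real.sqrt (E j) ^ 2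
          + Real.sqrt 2 * (k * F) * (Real.sqrt (E (j + 1)) + Real.sqrt (E j)) := by
        have t1 : F * (k * ‖(k⁻¹ • (U (j + 1 + 1) - U (j + 1)) : V)‖)
            ≤ F * (k * (Real.sqrt 2 * Real.sqrt (E (j + 1)))) :=
          mul_le_mul_of_nonneg_left (mul_le_mul_of_nonneg_left h1 hk.le) hF0
        have t0 : F * (k * ‖(k⁻¹ • (U (j + 1) - U j) : V)‖)
            ≤ F * (k * (Real.sqrt 2 * Real.sqrt (E j))) :=
          mul_le_mul_of_nonneg_left (mul_le_mul_of_nonneg_left h0 hk.le) hF0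
        rw [hx2, hy2]
        nlinarith [hid, hip]
      nlinarith [Real.sqrt_nonneg (E (j + 1)), Real.sqrt_nonneg (E j),
        mul_nonneg (Real.sqrt_nonneg 2) hkF, hEd2,
        sq_nonneg (Real.sqrt (E (j + 1)) - Real.sqrt (E j) - Real.sqrt 2 * (k * F))]
    have hind : ∀ n, n ≤ N - 1 →
        Real.sqrt (E n) ≤ Real.sqrt (E 0) + Real.sqrt 2 * (k * F) * n := by
      intro n
      induction n with
      | zero => intro _; simp
      | succ j ih =>
        intro hj
        have h1 := ih (by omega)
        have h2 := hstep2 j hj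
        push_cast
        linarith
    -- final assembly
    have hdm := hd m
    have hNm : Nh ((1/2:ℝ) • (U (m + 1) + U m)) ≤ (Real.sqrt α)⁻¹ * Real.sqrt (E m) := by
      have h1 := hElow m
      have hA0 : 0 ≤ Nh ((1/2:ℝ) • (U (m + 1) + U m)) := apply_nonneg _ _
      have h2 : (Real.sqrt α * Nh ((1/2:ℝ) • (U (m + 1) + U m))) ^ 2 ≤ E m := by
        rw [mul_pow, Real.sq_sqrt hα.le]
        nlinarith [norm_nonneg (k⁻¹ • (U (m + 1) - U m) : V)]
      have h3 : Real.sqrt α * Nh ((1/2:ℝ) • (U (m + 1) + U m)) ≤ Real.sqrt (E m) := by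
        have := Real.sqrt_le_sqrt h2
        rwa [Real.sqrt_sq (by positivity)] at this
      have hsa : (0:ℝ) < Real.sqrt α := Real.sqrt_pos.mpr hα
      calc Nh ((1/2:ℝ) • (U (m + 1) + U m))
          = (Real.sqrt α)⁻¹ * (Real.sqrt α * Nh ((1/2:ℝ) • (U (m + 1) + U m))) := by
            field_simp
        _ ≤ (Real.sqrt α)⁻¹ * Real.sqrt (E m) :=
            mul_le_mul_of_nonneg_left h3 (by positivity)
    have hEm : Real.sqrt (E m) ≤ Real.sqrt (E 0) + Real.sqrt 2 * (k * F) * m := hind m hm2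
    have hkm : k * F * m ≤ T * F := by
      have hmN : (m:ℝ) ≤ (N:ℝ) := by exact_mod_cast le_trans hm2 (Nat.sub_le N 1)
      nlinarith [mul_le_mul_of_nonneg_left hmN hk.le, hF0, hkN]
    have hE0up : Real.sqrt (E 0) ≤ ‖(k⁻¹ • (U 1 - U 0) : V)‖
        + Real.sqrt β * Nh ((1/2:ℝ) • (U 1 + U 0)) := by
      have h1 : a ((1/2:ℝ) • (U 1 + U 0)) ((1/2:ℝ) • (U 1 + U 0))
          ≤ β * Nh ((1/2:ℝ) • (U 1 + U 0)) ^ 2 := by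
        have := le_trans (le_abs_self _) (hbound ((1/2:ℝ) • (U 1 + U 0)) ((1/2:ℝ) • (U 1 + U 0)))
        nlinarith [this]
      have h2 : (0:ℝ) ≤ a (k⁻¹ • (U 1 - U 0)) (k⁻¹ • (U 1 - U 0)) :=
        le_trans (mul_nonneg hα.le (sq_nonneg _)) (hcoer _)
      have h3 : E 0 ≤ ‖(k⁻¹ • (U 1 - U 0) : V)‖ ^ 2
          + β * Nh ((1/2:ℝ) • (U 1 + U 0)) ^ 2 := by
        simp only [hE, zero_add]
        nlinarith [mul_nonneg (by positivity : (0:ℝ) ≤ k ^ 2 / 4) h2]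
      have h4 : E 0 ≤ (‖(k⁻¹ • (U 1 - U 0) : V)‖
          + Real.sqrt β * Nh ((1/2:ℝ) • (U 1 + U 0))) ^ 2 := by
        nlinarith [Real.sq_sqrt hβ.le,
          mul_nonneg (norm_nonneg (k⁻¹ • (U 1 - U 0) : V))
            (mul_nonneg (Real.sqrt_nonneg β) (apply_nonneg Nh ((1/2:ℝ) • (U 1 + U 0))))]
      calc Real.sqrt (E 0)
          ≤ Real.sqrt ((‖(k⁻¹ • (U 1 - U 0) : V)‖
            + Real.sqrt β * Nh ((1/2:ℝ) • (U 1 + U 0))) ^ 2) := Real.sqrt_le_sqrt h4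
        _ = _ := Real.sqrt_sq (by positivity)
    have hc2 : (0:ℝ) ≤ Real.sqrt 2 + (Real.sqrt α)⁻¹ := by positivity
    have hchain : Real.sqrt (E m) ≤ ‖(k⁻¹ • (U 1 - U 0) : V)‖
        + Real.sqrt β * Nh ((1/2:ℝ) • (U 1 + U 0)) + Real.sqrt 2 * (T * F) := by
      have := mul_le_mul_of_nonneg_left hkm (Real.sqrt_nonneg 2)
      nlinarith [hEm, hE0up]
    have hfin : ‖(k⁻¹ • (U 1 - U 0) : V)‖ + Real.sqrt β * Nh ((1/2:ℝ) • (U 1 + U 0))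
        + Real.sqrt 2 * (T * F)
        ≤ (1 + Real.sqrt β + Real.sqrt 2 * T) *
          (‖(k⁻¹ • (U 1 - U 0) : V)‖ + Nh ((1/2:ℝ) • (U 1 + U 0)) + F) := by
      nlinarith [norm_nonneg (k⁻¹ • (U 1 - U 0) : V), apply_nonneg Nh ((1/2:ℝ) • (U 1 + U 0)),
        hF0, Real.sqrt_nonneg β, Real.sqrt_nonneg 2, hT.le,
        mul_nonneg (Real.sqrt_nonneg 2) hT.le]
    calc ‖(k⁻¹ • (U (m + 1) - U m) : V)‖ + Nh ((1 / 2 : ℝ) • (U (m + 1) + U m))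
        ≤ Real.sqrt 2 * Real.sqrt (E m) + (Real.sqrt α)⁻¹ * Real.sqrt (E m) := by
          have : ((1:ℝ)/2) = (1/2:ℝ) := rfl
          exact add_le_add hdm hNm
      _ = (Real.sqrt 2 + (Real.sqrt α)⁻¹) * Real.sqrt (E m) := by ring
      _ ≤ (Real.sqrt 2 + (Real.sqrt α)⁻¹) *
          (‖(k⁻¹ • (U 1 - U 0) : V)‖ + Real.sqrt β * Nh ((1/2:ℝ) • (U 1 + U 0))
            + Real.sqrt 2 * (T * F)) := mul_le_mul_of_nonneg_left hchain hc2
      _ ≤ (Real.sqrt 2 + (Real.sqrt α)⁻¹) * (1 + Real.sqrt β + Real.sqrt 2 * T) *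
          (‖(k⁻¹ • (U 1 - U 0) : V)‖ + Nh ((1/2:ℝ) • (U 1 + U 0)) + F) := by
          rw [mul_assoc]
          exact mul_le_mul_of_nonneg_left hfin hc2
  have h1mem : (1:ℕ) ∈ Finset.Icc 1 (N - 1) := Finset.mem_Icc.mpr ⟨le_refl 1, by omega⟩
  exact main ((Finset.Icc 1 (N - 1)).sup' (Finset.nonempty_Icc.mpr (by omega)) fun n => ‖f n‖)
    (le_trans (norm_nonneg (f 1)) (Finset.le_sup' (fun n => ‖f n‖) h1mem))
    (fun n hn1 hn2 => Finset.le_sup' (fun n => ‖f n‖) (Finset.mem_Icc.mpr ⟨hn1, hn2⟩))
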